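/- Let n and t be positive integers with 1 < t < n − 1. Then every (n,t)-cooling code C satisfies |C| ≤ 2^{n−t} − 1. -/

import Mathlib

/-- An `(n,t)`-cooling code of size `M` over coefficients `F`: `M` pairwise disjoint
subsets (codesets) of `F^n` such that for every `t`-subset `S` of coordinates and every
codeset, some vector in the codeset has support disjoint from `S`. -/
def IsCoolingCode (F : Type*) [Zero F] (n t M : ℕ)
    (C : Fin M → Set (Fin n → F)) : Prop :=
  (∀ i j : Fin M, i ≠ j → Disjoint (C i) (C j)) ∧
  ∀ S : Finset (Fin n), S.card = t → ∀ i : Fin M,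
    ∃ x ∈ C i, ∀ j ∈ S, x j = 0

open Classical in
private lemma card_vanish (n : ℕ) (S : Finset (Fin n)) :
    Fintype.card {x : Fin n → ZMod 2 // ∀ j ∈ S, x j = 0} = 2 ^ (n - S.card) := by
  have e : {x : Fin n → ZMod 2 // ∀ j ∈ S, x j = 0} ≃ ({j : Fin n // j ∉ S} → ZMod 2) :=
    { toFun := fun x j => x.1 j.1
      invFun := fun g => ⟨fun j => if h : j ∈ S then 0 else g ⟨j, h⟩, fun j hj => by simp [hj]⟩
      left_inv := by
        intro x; ext j; by_cases h : j ∈ S <;> simp [h]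
        exact (x.2 j h).symm
      right_inv := by intro g; ext j; simp [j.2] }
  rw [Fintype.card_congr e, Fintype.card_fun, Fintype.card_subtype_compl,
    Fintype.card_coe, Fintype.card_fin, ZMod.card]

theorem stmt_6 (n t : ℕ) (ht : 1 < t) (htn : t < n - 1) (M : ℕ)
    (C : Fin M → Set (Fin n → ZMod 2))
    (hC : IsCoolingCode (ZMod 2) n t M C) :
    M ≤ 2 ^ (n - t) - 1 := by
  classical
  obtain ⟨hdisj, hcool⟩ := hC
  have hn : t + 2 ≤ n := by omega
  -- Step A : choice of vanishing vectors, giving an injection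
  have stepA : ∀ S : Finset (Fin n), S.card = t →
      ∃ f : Fin M → {x : Fin n → ZMod 2 // ∀ j ∈ S, x j = 0},
        Function.Injective f ∧ ∀ i, (f i : Fin n → ZMod 2) ∈ C i := by
    intro S hS
    choose f hf1 hf2 using hcool S hS
    refine ⟨fun i => ⟨f i, hf2 i⟩, ?_, hf1⟩
    intro i j hij
    by_contra hne
    exact Set.not_disjoint_iff.mpr
      ⟨f i, hf1 i, by rw [show f i = f j from congrArg Subtype.val hij]; exact hf1 j⟩
      (hdisj i j hne)
  have hMle : M ≤ 2 ^ (n - t) := by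
    obtain ⟨S, -, hS⟩ := Finset.exists_subset_card_eq
      (show t ≤ (Finset.univ : Finset (Fin n)).card by simp; omega)
    obtain ⟨f, hfinj, -⟩ := stepA S hS
    have h := Fintype.card_le_of_injective f hfinj
    rwa [card_vanish, hS, Fintype.card_fin] at h
  by_contra hlt
  have hM : M = 2 ^ (n - t) := by
    have h1 : 1 ≤ 2 ^ (n - t) := Nat.one_le_two_pow
    omega
  -- key lemma : existence and uniqueness of codewords supported in a given (n-t)-set
  have key : ∀ T : Finset (Fin n), T.card = n - t →
      (∀ x : Fin n → ZMod 2, (∀ j, j ∉ T → x j = 0) → ∃ i, x ∈ C i) ∧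
      (∀ x y : Fin n → ZMod 2, (∀ j, j ∉ T → x j = 0) → (∀ j, j ∉ T → y j = 0) →
        ∀ i : Fin M, x ∈ C i → y ∈ C i → x = y) := by
    intro T hT
    have hTc : Tᶜ.card = t := by
      rw [Finset.card_compl, hT, Fintype.card_fin]; omega
    obtain ⟨f, hfinj, hfC⟩ := stepA Tᶜ hTc
    have hbij : Function.Bijective f := by
      rw [Fintype.bijective_iff_injective_and_card]
      refine ⟨hfinj, ?_⟩
      rw [card_vanish, hTc, Fintype.card_fin, hM]
    have huniq : ∀ (x : Fin n → ZMod 2) (hx : ∀ j, j ∉ T → x j = 0) (i : Fin M),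
        x ∈ C i → (f i : Fin n → ZMod 2) = x := by
      intro x hx i hxi
      obtain ⟨a, ha⟩ := hbij.2 ⟨x, fun j hj => hx j (Finset.mem_compl.mp hj)⟩
      have hxa : x ∈ C a := by
        have := hfC a
        rw [ha] at this
        exact this
      have hai : a = i := by
        by_contra hne
        exact Set.not_disjoint_iff.mpr ⟨x, hxa, hxi⟩ (hdisj a i hne)
      rw [← hai, ha]
    constructor
    · intro x hx
      obtain ⟨a, ha⟩ := hbij.2 ⟨x, fun j hj => hx j (Finset.mem_compl.mp hj)⟩
      refine ⟨a, ?_⟩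
      have := hfC a
      rw [ha] at this
      exact this
    · intro x y hx hy i hxi hyi
      rw [← huniq x hx i hxi, ← huniq y hy i hyi]
  -- choose a coordinate set X of size n - t - 2
  obtain ⟨X, -, hX⟩ := Finset.exists_subset_card_eq
    (show n - t - 2 ≤ (Finset.univ : Finset (Fin n)).card by simp; omega)
  have hXc : Xᶜ.card = t + 2 := by
    rw [Finset.card_compl, hX, Fintype.card_fin]; omega
  -- the marked vectors
  set vec : Option {a : Fin n // a ∈ Xᶜ} × ({j : Fin n // j ∈ X} → ZMod 2) →
      Fin n → ZMod 2 := fun p j =>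
    match p.1 with
    | none => if h : j ∈ X then p.2 ⟨j, h⟩ else 0
    | some a => if j = a.1 then 1 else if h : j ∈ X then p.2 ⟨j, h⟩ else 0
    with hvec
  set A : Option {a : Fin n // a ∈ Xᶜ} × ({j : Fin n // j ∈ X} → ZMod 2) →
      Finset (Fin n) := fun p =>
    match p.1 with
    | none => ∅
    | some a => {a.1}
    with hA
  have hvan : ∀ p j, j ∉ X → j ∉ A p → vec p j = 0 := by
    intro p j hjX hjA
    rcases p with ⟨o, g⟩
    match o with
    | none => simp [hvec, hjX]
    | some a =>
        have : j ≠ a.1 := by simpa [hA] using hjA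
        simp [hvec, hjX, this]
  have hAcard : ∀ p, (A p).card ≤ 1 := by
    intro ⟨o, g⟩
    match o with
    | none => simp [hA]
    | some a => simp [hA]
  -- existence of a codeset for each marked vector
  have hex : ∀ p, ∃ i, vec p ∈ C i := by
    intro p
    have hcard : (X ∪ A p).card ≤ n - t := by
      have := Finset.card_union_le X (A p)
      have := hAcard p
      omega
    obtain ⟨T, hsub, -, hTcard⟩ := Finset.exists_subsuperset_card_eq
      (Finset.subset_univ (X ∪ A p)) hcard (by simp)
    exact (key T hTcard).1 (vec p) (fun j hj => hvan p j
      (fun hjX => hj (hsub (Finset.mem_union_left _ hjX)))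
      (fun hjA => hj (hsub (Finset.mem_union_right _ hjA))))
  choose Φ hΦ using hex
  -- injectivity
  have hinj : Function.Injective Φ := by
    intro p q hpq
    -- a common support set
    have hcard : ((X ∪ A p) ∪ A q).card ≤ n - t := by
      have h1 := Finset.card_union_le (X ∪ A p) (A q)
      have h2 := Finset.card_union_le X (A p)
      have := hAcard p
      have := hAcard q
      omega
    obtain ⟨T, hsub, -, hTcard⟩ := Finset.exists_subsuperset_card_eq
      (Finset.subset_univ ((X ∪ A p) ∪ A q)) hcard (by simp)
    have hvp : ∀ j, j ∉ T → vec p j = 0 := fun j hj => hvan p j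
      (fun h => hj (hsub (Finset.mem_union_left _ (Finset.mem_union_left _ h))))
      (fun h => hj (hsub (Finset.mem_union_left _ (Finset.mem_union_right _ h))))
    have hvq : ∀ j, j ∉ T → vec q j = 0 := fun j hj => hvan q j
      (fun h => hj (hsub (Finset.mem_union_left _ (Finset.mem_union_left _ h))))
      (fun h => hj (hsub (Finset.mem_union_right _ h)))
    have heq : vec p = vec q := by
      have h2 := hΦ q
      rw [← hpq] at h2
      exact (key T hTcard).2 (vec p) (vec q) hvp hvq (Φ p) (hΦ p) h2
    -- deduce p = q
    rcases p with ⟨o, g⟩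
    rcases q with ⟨o', g'⟩
    have hval : ∀ j, vec (o, g) j = vec (o', g') j := fun j => congrFun heq j
    match o, o' with
    | none, none =>
        have : g = g' := by
          funext j
          have := hval j.1
          simpa [hvec, j.2] using this
        rw [this]
    | none, some a =>
        exfalso
        have := hval a.1
        have haX : a.1 ∉ X := Finset.mem_compl.mp a.2
        simp [hvec, haX] at this
    | some a, none =>
        exfalso
        have := hval a.1
        have haX : a.1 ∉ X := Finset.mem_compl.mp a.2
        simp [hvec, haX] at this
    | some a, some a' =>
        have haa : a = a' := by
          by_contra hne
          have hne' : a.1 ≠ a'.1 := fun h => hne (Subtype.ext h)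
          have := hval a.1
          have haX : a.1 ∉ X := Finset.mem_compl.mp a.2
          simp [hvec, haX, hne'] at this
        subst haa
        have : g = g' := by
          funext j
          have := hval j.1
          have hja : j.1 ≠ a.1 := by
            intro h
            exact (Finset.mem_compl.mp a.2) (h ▸ j.2)
          simpa [hvec, j.2, hja] using this
        rw [this]
  -- counting
  have hcount := Fintype.card_le_of_injective Φ hinj
  rw [Fintype.card_prod, Fintype.card_option, Fintype.card_fun, Fintype.card_coe,
    Fintype.card_coe, Fintype.card_fin, ZMod.card, hX, hXc, hM] at hcount
  have h4 : 2 ^ (n - t) = 4 * 2 ^ (n - t - 2) := by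
    have : 2 ^ (n - t) = 2 ^ (2 + (n - t - 2)) := by congr 1; omega
    rw [this, pow_add]; ring
  rw [h4] at hcount
  have hpos : 0 < 2 ^ (n - t - 2) := Nat.pow_pos (by norm_num)
  have := Nat.le_of_mul_le_mul_right (by linarith [hcount] : (t + 3) * 2 ^ (n - t - 2) ≤ 4 * 2 ^ (n - t - 2)) hpos
  omega
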